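/- Suppose the Borel cocycle α : G × X → H is proper with respect to μ, and let u : H → ℂ be a continuous function vanishing at infinity. Then û vanishes at infinity in the following sense: for every ε > 0 there is a compact set K ⊆ G such that |û(g)| ≤ ε for all g ∈ G ∖ K, where û(g) = ∫_X u(α(g, x))·√(χ(g, x)) dμ(x). -/

import Mathlib

open MeasureTheory Filter Set
open scoped ENNReal

/-- The set `K(A, L)` of elements `g ∈ G` such that
`μ {x ∈ A ∩ g⁻¹A : α(g, x) ∈ L} > 0`. -/
def KSet {G H X : Type*} [Group G] [MeasurableSpace X] [MulAction G X]
    (μ : Measure X) (α : G → X → H) (A : Set X) (L : Set H) : Set G :=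
  {g : G | 0 < μ {x | x ∈ A ∧ g • x ∈ A ∧ α g x ∈ L}}

/-- Properness of a cocycle `α : G × X → H` with respect to `μ`. -/
def ProperCocycle {G H X : Type*} [Group G] [TopologicalSpace G] [TopologicalSpace H]
    [MeasurableSpace X] [MulAction G X] (μ : Measure X) (α : G → X → H) : Prop :=
  (∀ A : Set X, MeasurableSet A → ∀ ε : ℝ, 0 < ε → ∀ K : Set G, IsCompact K →
    ∃ A' : Set X, A' ⊆ A ∧ MeasurableSet A' ∧ μ (A \ A') < ENNReal.ofReal ε ∧
      IsCompact (closure (Set.image2 α K A'))) ∧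
  (∀ L : Set H, IsCompact L → ∀ ε : ℝ, 0 < ε →
    ∃ A : Set X, MeasurableSet A ∧ μ (Set.univ \ A) ≤ ENNReal.ofReal ε ∧
      IsCompact (closure (KSet μ α A L)))

/-- Lemma 2.1(b): if the Borel cocycle `α` is proper and `u : H → ℂ` is continuous and
vanishes at infinity, then `û(g) = ∫_X u(α(g, x))·√(χ(g, x)) dμ(x)` vanishes at infinity:
for every `ε > 0` there is a compact `K ⊆ G` with `|û(g)| ≤ ε` for all `g ∉ K`. -/
theorem uhat_vanishes_at_infinity
    {G H X : Type*}
    [Group G] [TopologicalSpace G] [IsTopologicalGroup G] [LocallyCompactSpace G]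
    [SecondCountableTopology G] [T2Space G] [MeasurableSpace G] [BorelSpace G]
    [Group H] [TopologicalSpace H] [IsTopologicalGroup H] [LocallyCompactSpace H]
    [SecondCountableTopology H] [T2Space H] [MeasurableSpace H] [BorelSpace H]
    [MeasurableSpace X] [StandardBorelSpace X]
    [MulAction G X] (hact : Measurable fun p : G × X => p.1 • p.2)
    (μ : Measure X) [IsProbabilityMeasure μ]
    -- the Radon–Nikodym cocycle of the action
    (χ : G → X → ℝ)
    (hχmeas : Measurable fun p : G × X => χ p.1 p.2)
    (hχnonneg : ∀ g x, 0 ≤ χ g x)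
    (hχRN : ∀ g : G, ∀ f : X → ℝ≥0∞, Measurable f →
      ∫⁻ x, f (g • x) * ENNReal.ofReal (χ g x) ∂μ = ∫⁻ x, f x ∂μ)
    (hχcoc : ∀ g h : G, ∀ᵐ x ∂μ, χ (g * h) x = χ g (h • x) * χ h x)
    -- the Borel cocycle
    (α : G → X → H)
    (hαmeas : Measurable fun p : G × X => α p.1 p.2)
    (hαcoc : ∀ g h : G, ∀ᵐ x ∂μ, α (g * h) x = α g (h • x) * α h x)
    (hproper : ProperCocycle μ α)
    -- `u` is continuous and vanishes at infinity
    (u : H → ℂ) (hucont : Continuous u) (huC0 : Tendsto u (cocompact H) (nhds 0)) :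
    ∀ ε : ℝ, 0 < ε → ∃ K : Set G, IsCompact K ∧ ∀ g ∉ K,
      ‖∫ x, u (α g x) * (Real.sqrt (χ g x) : ℂ) ∂μ‖ ≤ ε := by
  intro ε hε
  -- `u` is bounded
  obtain ⟨C, hC1, hCb⟩ : ∃ C : ℝ, 1 ≤ C ∧ ∀ h, ‖u h‖ ≤ C := by
    have h1 : (u ⁻¹' Metric.ball 0 1) ∈ cocompact H :=
      huC0 (Metric.ball_mem_nhds 0 one_pos)
    rw [mem_cocompact] at h1
    obtain ⟨t, ht, hts⟩ := h1
    obtain ⟨C0, hC0⟩ := (ht.image (continuous_norm.comp hucont)).bddAbove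
    refine ⟨max C0 1, le_max_right _ _, fun h => ?_⟩
    by_cases hh : h ∈ t
    · exact le_trans (hC0 (mem_image_of_mem _ hh)) (le_max_left _ _)
    · have h2 : u h ∈ Metric.ball (0 : ℂ) 1 := hts hh
      rw [Metric.mem_ball, dist_zero_right] at h2
      exact le_trans h2.le (le_max_right _ _)
  have hC0' : (0:ℝ) < C := lt_of_lt_of_le one_pos hC1
  set δ : ℝ := ε / 2 with hδdef
  set b : ℝ := ε / (4 * C) with hbdef
  have hb0 : 0 < b := by positivity
  set ε' : ℝ := b ^ 2 with hε'def
  have hε'0 : 0 < ε' := by positivity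
  -- compact set `L` outside which `‖u‖ ≤ δ`
  obtain ⟨L, hLc, hLu⟩ : ∃ L : Set H, IsCompact L ∧ ∀ h ∉ L, ‖u h‖ ≤ δ := by
    have h1 : (u ⁻¹' Metric.ball 0 δ) ∈ cocompact H :=
      huC0 (Metric.ball_mem_nhds 0 (by positivity))
    rw [mem_cocompact] at h1
    obtain ⟨t, ht, hts⟩ := h1
    refine ⟨t, ht, fun h hh => ?_⟩
    have h2 : u h ∈ Metric.ball (0 : ℂ) δ := hts hh
    rw [Metric.mem_ball, dist_zero_right] at h2
    exact h2.le
  obtain ⟨A, hAmeas, hAμ, hKc⟩ := hproper.2 L hLc ε' hε'0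
  refine ⟨closure (KSet μ α A L), hKc, ?_⟩
  intro g hg
  have hgK : g ∉ KSet μ α A L := fun h => hg (subset_closure h)
  have hNzero : μ {x | x ∈ A ∧ g • x ∈ A ∧ α g x ∈ L} = 0 := by
    have h1 : ¬ 0 < μ {x | x ∈ A ∧ g • x ∈ A ∧ α g x ∈ L} := hgK
    simpa [pos_iff_ne_zero, not_not] using h1
  -- measurability
  have hαg : Measurable fun x => α g x :=
    hαmeas.comp (measurable_const.prodMk measurable_id)
  have hχg : Measurable fun x => χ g x :=
    hχmeas.comp (measurable_const.prodMk measurable_id)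
  have hgact : Measurable fun x : X => g • x :=
    hact.comp (measurable_const.prodMk measurable_id)
  set s : X → ℝ≥0∞ := fun x => ENNReal.ofReal (Real.sqrt (χ g x)) with hsdef
  set c : X → ℝ≥0∞ := fun x => ENNReal.ofReal (χ g x) with hcdef
  have hsm : Measurable s := (Real.continuous_sqrt.measurable.comp hχg).ennreal_ofReal
  have hcm : Measurable c := hχg.ennreal_ofReal
  set Fa : X → ℝ≥0∞ := Aᶜ.indicator (1 : X → ℝ≥0∞) with hFadef
  set Fb : X → ℝ≥0∞ := fun x => Aᶜ.indicator (1 : X → ℝ≥0∞) (g • x) with hFbdef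
  have hFam : Measurable Fa := measurable_one.indicator hAmeas.compl
  have hFbm : Measurable Fb := hFam.comp hgact
  have hsc : ∀ x, s x ^ (2:ℝ) = c x := by
    intro x
    rw [hsdef, ENNReal.ofReal_rpow_of_nonneg (Real.sqrt_nonneg _) (by norm_num),
      show (2:ℝ) = ((2:ℕ):ℝ) by norm_num, Real.rpow_natCast, sq,
      Real.mul_self_sqrt (hχnonneg g x)]
  have hint_c : ∫⁻ x, c x ∂μ = 1 := by
    have h1 := hχRN g (fun _ => 1) measurable_const
    simpa using h1
  have hints2 : ∫⁻ x, s x ^ (2:ℝ) ∂μ = 1 := (lintegral_congr hsc).trans hint_c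
  have h22 : Real.HolderConjugate 2 2 := Real.HolderConjugate.two_two
  have hμAc : μ Aᶜ ≤ ENNReal.ofReal ε' := by
    rw [Set.compl_eq_univ_diff]; exact hAμ
  have hFa2 : ∀ x, Fa x ^ (2:ℝ) = Fa x := by
    intro x
    by_cases hx : x ∈ Aᶜ <;>
      simp [hFadef, Set.indicator_of_mem, Set.indicator_of_notMem, hx,
        ENNReal.zero_rpow_of_pos (by norm_num : (0:ℝ) < 2)]
  have hFb2 : ∀ x, Fb x ^ (2:ℝ) = Fb x := by
    intro x
    by_cases hx : g • x ∈ Aᶜ <;>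
      simp [hFbdef, Set.indicator_of_mem, Set.indicator_of_notMem, hx,
        ENNReal.zero_rpow_of_pos (by norm_num : (0:ℝ) < 2)]
  have hroot : (ENNReal.ofReal ε') ^ (1/2:ℝ) = ENNReal.ofReal b := by
    have h1 : ENNReal.ofReal ε' = ENNReal.ofReal b ^ (2:ℝ) := by
      rw [ENNReal.ofReal_rpow_of_nonneg hb0.le (by norm_num), hε'def,
        show (2:ℝ) = ((2:ℕ):ℝ) by norm_num, Real.rpow_natCast]
    rw [h1, ← ENNReal.rpow_mul]
    norm_num
  -- T0
  have hT0 : ∫⁻ x, s x ∂μ ≤ 1 := by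
    have h := ENNReal.lintegral_mul_le_Lp_mul_Lq μ h22
      (aemeasurable_const : AEMeasurable (fun _ : X => (1:ℝ≥0∞)) μ) hsm.aemeasurable
    simp only [Pi.mul_apply, one_mul, ENNReal.one_rpow, lintegral_one, measure_univ,
      hints2] at h
    simpa using h
  -- T1
  have hT1 : ∫⁻ x, Fa x * s x ∂μ ≤ ENNReal.ofReal b := by
    have h := ENNReal.lintegral_mul_le_Lp_mul_Lq μ h22 hFam.aemeasurable hsm.aemeasurable
    simp only [Pi.mul_apply] at h
    calc ∫⁻ x, Fa x * s x ∂μ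
        ≤ (∫⁻ x, Fa x ^ (2:ℝ) ∂μ) ^ (1/2:ℝ) * (∫⁻ x, s x ^ (2:ℝ) ∂μ) ^ (1/2:ℝ) := h
      _ = (μ Aᶜ) ^ (1/2:ℝ) := by
          rw [hints2, ENNReal.one_rpow, mul_one, lintegral_congr hFa2,
            lintegral_indicator_one hAmeas.compl]
      _ ≤ (ENNReal.ofReal ε') ^ (1/2:ℝ) := ENNReal.rpow_le_rpow hμAc (by norm_num)
      _ = ENNReal.ofReal b := hroot
  -- T2
  have hFbc : ∫⁻ x, Fb x * c x ∂μ = μ Aᶜ := by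
    have h := hχRN g (Aᶜ.indicator (1 : X → ℝ≥0∞))
      (measurable_one.indicator hAmeas.compl)
    rw [lintegral_indicator_one hAmeas.compl] at h
    exact h
  have hT2 : ∫⁻ x, Fb x * s x ∂μ ≤ ENNReal.ofReal b := by
    have heq : ∀ x, Fb x * s x = (Fb x * s x) * Fb x := by
      intro x
      by_cases hx : g • x ∈ Aᶜ <;>
        simp [hFbdef, Set.indicator_of_mem, Set.indicator_of_notMem, hx]
    have h := ENNReal.lintegral_mul_le_Lp_mul_Lq μ h22
      ((hFbm.mul hsm)).aemeasurable hFbm.aemeasurable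
    simp only [Pi.mul_apply] at h
    have hsq : ∀ x, (Fb x * s x) ^ (2:ℝ) = Fb x * c x := by
      intro x
      rw [ENNReal.mul_rpow_of_nonneg _ _ (by norm_num : (0:ℝ) ≤ 2), hFb2, hsc]
    have hFble : ∫⁻ x, Fb x ^ (2:ℝ) ∂μ ≤ 1 := by
      rw [lintegral_congr hFb2]
      calc ∫⁻ x, Fb x ∂μ ≤ ∫⁻ _, 1 ∂μ := by
            refine lintegral_mono fun x => ?_
            by_cases hx : g • x ∈ Aᶜ <;>
              simp [hFbdef, Set.indicator_of_mem, Set.indicator_of_notMem, hx]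
        _ = 1 := by simp
    calc ∫⁻ x, Fb x * s x ∂μ = ∫⁻ x, (Fb x * s x) * Fb x ∂μ := lintegral_congr heq
      _ ≤ (∫⁻ x, (Fb x * s x) ^ (2:ℝ) ∂μ) ^ (1/2:ℝ) * (∫⁻ x, Fb x ^ (2:ℝ) ∂μ) ^ (1/2:ℝ) := h
      _ ≤ (ENNReal.ofReal ε') ^ (1/2:ℝ) * (1:ℝ≥0∞) ^ (1/2:ℝ) := by
          refine mul_le_mul' (ENNReal.rpow_le_rpow ?_ (by norm_num))
            (ENNReal.rpow_le_rpow hFble (by norm_num))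
          rw [lintegral_congr hsq, hFbc]
          exact hμAc
      _ = ENNReal.ofReal b := by rw [ENNReal.one_rpow, mul_one, hroot]
  -- pointwise a.e. bound
  have hae : ∀ᵐ x ∂μ, ENNReal.ofReal ‖u (α g x) * ((Real.sqrt (χ g x) : ℝ) : ℂ)‖ ≤
      ENNReal.ofReal δ * s x + ENNReal.ofReal C * (Fa x * s x)
        + ENNReal.ofReal C * (Fb x * s x) := by
    rw [ae_iff]
    refine measure_mono_null (fun x hx => ?_) hNzero
    simp only [mem_setOf_eq, not_le] at hx
    by_contra hxN
    apply absurd hx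
    push_neg
    have hnorm : ‖u (α g x) * ((Real.sqrt (χ g x) : ℝ) : ℂ)‖
        = ‖u (α g x)‖ * Real.sqrt (χ g x) := by
      rw [norm_mul, Complex.norm_real, Real.norm_eq_abs,
        abs_of_nonneg (Real.sqrt_nonneg _)]
    rw [hnorm, ENNReal.ofReal_mul (norm_nonneg _)]
    by_cases hxA : x ∈ A ∧ g • x ∈ A
    · have hαL : α g x ∉ L := fun hL => hxN ⟨hxA.1, hxA.2, hL⟩
      have h1 : ‖u (α g x)‖ ≤ δ := hLu _ hαL
      calc ENNReal.ofReal ‖u (α g x)‖ * s x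
          ≤ ENNReal.ofReal δ * s x :=
            mul_le_mul_left (ENNReal.ofReal_le_ofReal h1) _
        _ ≤ _ := le_trans le_self_add le_self_add
    · have hCle : ENNReal.ofReal ‖u (α g x)‖ ≤ ENNReal.ofReal C :=
        ENNReal.ofReal_le_ofReal (hCb _)
      rcases not_and_or.mp hxA with h | h
      · have hFa1 : Fa x = 1 := Set.indicator_of_mem (Set.mem_compl h) (1 : X → ℝ≥0∞)
        calc ENNReal.ofReal ‖u (α g x)‖ * s x
            ≤ ENNReal.ofReal C * (Fa x * s x) := by
              rw [hFa1, one_mul]; exact mul_le_mul_left hCle _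
          _ ≤ _ := le_trans le_add_self le_self_add
      · have hFb1 : Fb x = 1 := Set.indicator_of_mem (Set.mem_compl h) (1 : X → ℝ≥0∞)
        calc ENNReal.ofReal ‖u (α g x)‖ * s x
            ≤ ENNReal.ofReal C * (Fb x * s x) := by
              rw [hFb1, one_mul]; exact mul_le_mul_left hCle _
          _ ≤ _ := le_add_self
  -- conclusion
  have hbound : ∫⁻ x, ENNReal.ofReal ‖u (α g x) * ((Real.sqrt (χ g x) : ℝ) : ℂ)‖ ∂μ
      ≤ ENNReal.ofReal ε := by
    calc ∫⁻ x, ENNReal.ofReal ‖u (α g x) * ((Real.sqrt (χ g x) : ℝ) : ℂ)‖ ∂μ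
        ≤ ∫⁻ x, (ENNReal.ofReal δ * s x + ENNReal.ofReal C * (Fa x * s x)
            + ENNReal.ofReal C * (Fb x * s x)) ∂μ := lintegral_mono_ae hae
      _ = ENNReal.ofReal δ * ∫⁻ x, s x ∂μ
            + ENNReal.ofReal C * ∫⁻ x, Fa x * s x ∂μ
            + ENNReal.ofReal C * ∫⁻ x, Fb x * s x ∂μ := by
          rw [lintegral_add_right (g := fun x => ENNReal.ofReal C * (Fb x * s x)) _
              ((hFbm.mul hsm).const_mul _),
            lintegral_add_right (g := fun x => ENNReal.ofReal C * (Fa x * s x)) _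
              ((hFam.mul hsm).const_mul _),
            lintegral_const_mul _ hsm,
            lintegral_const_mul (f := fun x => Fa x * s x) _ (hFam.mul hsm),
            lintegral_const_mul (f := fun x => Fb x * s x) _ (hFbm.mul hsm)]
      _ ≤ ENNReal.ofReal δ * 1 + ENNReal.ofReal C * ENNReal.ofReal b
            + ENNReal.ofReal C * ENNReal.ofReal b :=
          add_le_add (add_le_add (mul_le_mul_right hT0 _) (mul_le_mul_right hT1 _))
            (mul_le_mul_right hT2 _)
      _ = ENNReal.ofReal ε := by
          rw [mul_one, ← ENNReal.ofReal_mul hC0'.le,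
            ← ENNReal.ofReal_add (by positivity) (by positivity),
            ← ENNReal.ofReal_add (by positivity) (by positivity)]
          congr 1
          rw [hδdef, hbdef]
          field_simp
          ring
  refine le_trans (norm_integral_le_lintegral_norm _) ?_
  exact ENNReal.toReal_le_of_le_ofReal hε.le hbound
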